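/- Suppose λ_1 < 0 with multiplicity r (i.e., λ_1 = ⋯ = λ_r < λ_{r+1}), that [g_par]_i = 0 for 1 ≤ i ≤ r, and that the vector v̄ = −(Λ − λ_1 I)^† g_par satisfies ‖v̄‖₂ ≤ δ, where ^† denotes the Moore–Penrose pseudoinverse. Let α = √(δ² − ‖v̄‖₂²) and v* = v̄ + α e_1. Then (Λ − λ_1 I) v* = −g_par, ‖v*‖₂ = δ, and v* is a global minimizer of q_par(v) = g_par^T v + (1/2) v^T Λ v over the ball {v ∈ ℝ^{k+1} : ‖v‖₂ ≤ δ} (the 'hard case'). -/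

import Mathlib

open Matrix

/-- The Euclidean (two-)norm of a vector in `ℝ^m`. -/
noncomputable def norm2 {m : ℕ} (x : Fin m → ℝ) : ℝ := Real.sqrt (∑ i, x i ^ 2)

/-- The Moore–Penrose pseudoinverse of the diagonal matrix `diag d`. -/
noncomputable def diagPinv {m : ℕ} (d : Fin m → ℝ) : Matrix (Fin m) (Fin m) ℝ :=
  Matrix.diagonal (fun i => if d i = 0 then 0 else (d i)⁻¹)

/-- **the "hard case".** Suppose `Λ = diag(λ₁,…,λ_{k+1})` with
`λ₁ ≤ … ≤ λ_{k+1}`, `λ₁ < 0` of multiplicity `r` (i.e. `λ₁ = ⋯ = λ_r < λ_{r+1}`),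
`[g_par]_i = 0` for `1 ≤ i ≤ r`, and `v̄ = -(Λ - λ₁ I)† g_par` satisfies `‖v̄‖₂ ≤ δ`.
With `α = √(δ² - ‖v̄‖₂²)` and `v* = v̄ + α e₁`, one has `(Λ - λ₁ I) v* = -g_par`,
`‖v*‖₂ = δ`, and `v*` is a global minimizer of `q_par(v) = g_parᵀ v + (1/2) vᵀ Λ v`
over `{v : ‖v‖₂ ≤ δ}`. -/
theorem qpar_minimizer_hard_case
    (k : ℕ) (lam : Fin (k + 1) → ℝ) (hmono : Monotone lam)
    (gpar : Fin (k + 1) → ℝ) (δ : ℝ) (hδ : 0 < δ)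
    (qpar : (Fin (k + 1) → ℝ) → ℝ)
    (hq : ∀ v, qpar v = gpar ⬝ᵥ v + (1 / 2) * (v ⬝ᵥ (Matrix.diagonal lam).mulVec v))
    (hneg : lam 0 < 0)
    (r : ℕ) (hr1 : 1 ≤ r) (hr2 : r < k + 1)
    (heq : ∀ i : Fin (k + 1), (i : ℕ) < r → lam i = lam 0)
    (hgt : lam 0 < lam ⟨r, hr2⟩)
    (hgzero : ∀ i : Fin (k + 1), (i : ℕ) < r → gpar i = 0)
    (vbar : Fin (k + 1) → ℝ)
    (hvbar : vbar = -(diagPinv (fun i => lam i - lam 0)).mulVec gpar)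
    (hvbarnorm : norm2 vbar ≤ δ)
    (α : ℝ) (hα : α = Real.sqrt (δ ^ 2 - (norm2 vbar) ^ 2))
    (vstar : Fin (k + 1) → ℝ)
    (hvstar : vstar = vbar + α • (Pi.single 0 1 : Fin (k + 1) → ℝ)) :
    (Matrix.diagonal lam - lam 0 • 1).mulVec vstar = -gpar ∧
    norm2 vstar = δ ∧
    (norm2 vstar ≤ δ ∧
      ∀ v : Fin (k + 1) → ℝ, norm2 v ≤ δ → qpar vstar ≤ qpar v) := by
  -- basic facts
  have hk0 : ∀ i, lam 0 ≤ lam i := fun i => hmono (Fin.zero_le i)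
  have hzero_lt : (0 : Fin (k+1)).val < r := hr1
  have hg0 : gpar 0 = 0 := hgzero 0 hzero_lt
  have hglam : ∀ i : Fin (k+1), lam i = lam 0 → gpar i = 0 := by
    intro i hi
    by_cases h : (i : ℕ) < r
    · exact hgzero i h
    · exfalso
      have : lam ⟨r, hr2⟩ ≤ lam i := hmono (by simpa [Fin.le_def] using not_lt.mp h)
      linarith
  have hvbar' : ∀ i, vbar i = -((if lam i - lam 0 = 0 then 0 else (lam i - lam 0)⁻¹) * gpar i) := by
    intro i
    rw [hvbar]
    simp [diagPinv, Matrix.mulVec_diagonal]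
  have hvbar0 : vbar 0 = 0 := by
    rw [hvbar' 0]; simp
  have key : ∀ i, (lam i - lam 0) * vstar i = -gpar i := by
    intro i
    by_cases hi : lam i = lam 0
    · have : gpar i = 0 := hglam i hi
      rw [hi, this]; ring
    · have hi0 : i ≠ 0 := by
        intro h; exact hi (by rw [h])
      have hne : lam i - lam 0 ≠ 0 := sub_ne_zero.mpr hi
      have : vstar i = vbar i := by
        rw [hvstar]; simp [Pi.single_apply, hi0]
      rw [this, hvbar' i, if_neg hne]
      field_simp
  -- norms
  have hsq : ∀ i, vstar i ^ 2 = vbar i ^ 2 + α ^ 2 * (if i = 0 then 1 else 0) := by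
    intro i
    by_cases hi : i = (0 : Fin (k+1))
    · subst hi
      rw [hvstar]
      simp [hvbar0]
    · rw [hvstar]
      simp [Pi.single_apply, hi]
  have hnonneg : (0:ℝ) ≤ ∑ i, vbar i ^ 2 :=
    Finset.sum_nonneg fun i _ => sq_nonneg _
  have hnb : (norm2 vbar) ^ 2 = ∑ i, vbar i ^ 2 := Real.sq_sqrt hnonneg
  have hnbnn : 0 ≤ norm2 vbar := Real.sqrt_nonneg _
  have hdn : 0 ≤ δ ^ 2 - (norm2 vbar) ^ 2 := by nlinarith
  have hα2 : α ^ 2 = δ ^ 2 - (norm2 vbar) ^ 2 := by rw [hα]; exact Real.sq_sqrt hdn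
  have hsum : ∑ i, vstar i ^ 2 = δ ^ 2 := by
    have : ∑ i, vstar i ^ 2 = (∑ i, vbar i ^ 2) + α ^ 2 * ∑ i, (if i = (0 : Fin (k+1)) then (1:ℝ) else 0) := by
      rw [Finset.mul_sum, ← Finset.sum_add_distrib]
      exact Finset.sum_congr rfl fun i _ => hsq i
    rw [this]
    simp only [Finset.sum_ite_eq', Finset.mem_univ, if_true]
    rw [hα2, hnb]; ring
  have hnvstar : norm2 vstar = δ := by
    rw [norm2, hsum]
    exact Real.sqrt_sq hδ.le
  refine ⟨?_, hnvstar, hnvstar.le, ?_⟩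
  · funext i
    have hmv : ((Matrix.diagonal lam - lam 0 • 1).mulVec vstar) i = (lam i - lam 0) * vstar i := by
      have hd : (Matrix.diagonal lam - lam 0 • 1 : Matrix (Fin (k+1)) (Fin (k+1)) ℝ)
          = Matrix.diagonal (fun i => lam i - lam 0) := by
        ext a b
        by_cases h : a = b
        · subst h
          simp [Matrix.sub_apply, Matrix.smul_apply, Matrix.diagonal_apply_eq,
            Matrix.one_apply_eq]
        · simp [Matrix.sub_apply, Matrix.smul_apply, Matrix.diagonal_apply_ne _ h,
            Matrix.one_apply_ne h]
      rw [hd, Matrix.mulVec_diagonal]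
    rw [hmv, key i]; rfl
  · intro v hv
    have hq' : ∀ w : Fin (k+1) → ℝ,
        qpar w = ∑ i, (gpar i * w i + (1/2) * (lam i * w i ^ 2)) := by
      intro w
      rw [hq]
      simp only [dotProduct, Matrix.mulVec_diagonal, Finset.mul_sum,
        ← Finset.sum_add_distrib]
      exact Finset.sum_congr rfl fun i _ => by ring
    have hvsum : ∑ i, v i ^ 2 ≤ δ ^ 2 := by
      have h1 : (norm2 v) ^ 2 = ∑ i, v i ^ 2 :=
        Real.sq_sqrt (Finset.sum_nonneg fun i _ => sq_nonneg _)
      have h2 : 0 ≤ norm2 v := Real.sqrt_nonneg _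
      nlinarith
    have hiden : qpar v - qpar vstar =
        (∑ i, (1/2) * (lam i - lam 0) * (v i - vstar i) ^ 2)
          + (1/2) * lam 0 * ((∑ i, v i ^ 2) - ∑ i, vstar i ^ 2) := by
      rw [hq' v, hq' vstar, ← Finset.sum_sub_distrib]
      rw [show (∑ i, v i ^ 2) - ∑ i, vstar i ^ 2 = ∑ i, (v i ^ 2 - vstar i ^ 2) from
        by rw [Finset.sum_sub_distrib]]
      rw [Finset.mul_sum, ← Finset.sum_add_distrib]
      refine Finset.sum_congr rfl fun i _ => ?_
      have hgi : gpar i = -((lam i - lam 0) * vstar i) := by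
        have := key i; linarith
      rw [hgi]; ring
    have h1 : 0 ≤ ∑ i, (1/2) * (lam i - lam 0) * (v i - vstar i) ^ 2 :=
      Finset.sum_nonneg fun i _ =>
        mul_nonneg (mul_nonneg (by norm_num) (by linarith [hk0 i])) (sq_nonneg _)
    have h2 : 0 ≤ (1/2) * lam 0 * ((∑ i, v i ^ 2) - ∑ i, vstar i ^ 2) := by
      rw [hsum]
      nlinarith
    linarith
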